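/- Let f ∈ ℝ[X] be a nonzero squarefree polynomial and let A = ℝ[X]/(f), a finite-dimensional ℝ-vector space. Define the Hermite bilinear form B on A by B(p, q) = trace(L_{pq}), where L_{pq} : A → A is multiplication by pq. Then the rank of B equals the number of distinct complex roots of f (which equals deg f), and the signature of B equals the number of distinct real roots of f. -/

import Mathlib

open Matrix Polynomial Finset

section AuxLemmas

private lemma trace_mulLeft_pi' {ι : Type*} [Fintype ι] [DecidableEq ι] (v : ι → ℂ) :
    LinearMap.trace ℂ (ι → ℂ) (LinearMap.mulLeft ℂ v) = ∑ i, v i := by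
  rw [LinearMap.trace_eq_matrix_trace ℂ (Pi.basisFun ℂ ι), Matrix.trace]
  refine Finset.sum_congr rfl fun i _ => ?_
  simp [Matrix.diag, LinearMap.toMatrix_apply, LinearMap.mulLeft_apply]

private lemma trace_mulLeft_algEquiv' {R A B : Type*} [CommRing R] [CommRing A] [CommRing B]
    [Algebra R A] [Algebra R B] (e : A ≃ₐ[R] B) (x : A) :
    LinearMap.trace R B (LinearMap.mulLeft R (e x))
      = LinearMap.trace R A (LinearMap.mulLeft R x) := by
  rw [← LinearMap.trace_conj' (LinearMap.mulLeft R x) e.toLinearEquiv]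
  congr 1
  ext b
  simp [LinearEquiv.conj_apply, LinearMap.mulLeft_apply]

private lemma sum_eigen_decomp' {n : ℕ} {M : Matrix (Fin n) (Fin n) ℝ} (hM : M.IsHermitian) :
    ∃ L : (Fin n → ℝ) →ₗ[ℝ] (Fin n → ℝ),
      ∀ x, x ⬝ᵥ M.mulVec x = ∑ i, hM.eigenvalues i * (L x i) ^ 2 := by
  classical
  set U : Matrix (Fin n) (Fin n) ℝ := (hM.eigenvectorUnitary : Matrix (Fin n) (Fin n) ℝ) with hU
  refine ⟨(star U).mulVecLin, fun x => ?_⟩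
  have hd : (Matrix.diagonal (RCLike.ofReal ∘ hM.eigenvalues) : Matrix (Fin n) (Fin n) ℝ)
      = Matrix.diagonal hM.eigenvalues := by congr 1
  conv_lhs => rw [hM.spectral_theorem, hd, Unitary.conjStarAlgAut_apply]
  rw [← Matrix.mulVec_mulVec, ← Matrix.mulVec_mulVec, dotProduct_mulVec]
  have hv : Matrix.vecMul x U = (star U).mulVec x := by
    ext i
    simp [Matrix.vecMul, Matrix.mulVec, dotProduct, Matrix.star_apply, mul_comm]
  rw [hv]
  set y := (star U).mulVec x with hy
  have hdiag : (Matrix.diagonal hM.eigenvalues).mulVec y = fun i => hM.eigenvalues i * y i := by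
    ext i; simp [Matrix.mulVec_diagonal]
  rw [hdiag]
  simp only [dotProduct, Matrix.mulVecLin_apply]
  exact Finset.sum_congr rfl fun i _ => by ring

private lemma finrank_le_card_sign' {n : ℕ} {M : Matrix (Fin n) (Fin n) ℝ} (hM : M.IsHermitian)
    (P : Submodule ℝ (Fin n → ℝ)) (hP : ∀ x ∈ P, x ≠ 0 → 0 < x ⬝ᵥ M.mulVec x) :
    Module.finrank ℝ P ≤ (Finset.univ.filter fun i => 0 < hM.eigenvalues i).card := by
  classical
  obtain ⟨L, hL⟩ := sum_eigen_decomp' hM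
  set s : Finset (Fin n) := Finset.univ.filter fun i => 0 < hM.eigenvalues i with hs
  set T : (Fin n → ℝ) →ₗ[ℝ] ({ x // x ∈ s } → ℝ) :=
    LinearMap.pi (fun i : s => (LinearMap.proj (i : Fin n)).comp L) with hT
  set F := LinearMap.ker T with hFdef
  have hF : ∀ x ∈ F, x ⬝ᵥ M.mulVec x ≤ 0 := by
    intro x hx
    rw [hL]
    refine Finset.sum_nonpos fun i _ => ?_
    by_cases hi : 0 < hM.eigenvalues i
    · have hmem : i ∈ s := by simp [hs, hi]
      have hz : L x i = 0 := by
        have h0 := LinearMap.mem_ker.1 hx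
        have := congrFun h0 ⟨i, hmem⟩
        simpa [hT] using this
      simp [hz]
    · exact mul_nonpos_of_nonpos_of_nonneg (le_of_not_gt hi) (sq_nonneg _)
  have hdisj : P ⊓ F = ⊥ := by
    rw [Submodule.eq_bot_iff]
    rintro x ⟨hxP, hxF⟩
    by_contra hx0
    exact absurd (hP x hxP hx0) (not_lt.2 (hF x hxF))
  have h1 : Module.finrank ℝ P + Module.finrank ℝ F ≤ n := by
    have h := Submodule.finrank_sup_add_finrank_inf_eq P F
    rw [hdisj, finrank_bot, add_zero] at h
    rw [← h]
    have h5 := Submodule.finrank_le (P ⊔ F)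
    simpa using h5
  have h2 : n ≤ Module.finrank ℝ F + s.card := by
    have h := LinearMap.finrank_range_add_finrank_ker T
    rw [← hFdef] at h
    have hp : Module.finrank ℝ (Fin n → ℝ) = n := by simp
    rw [hp] at h
    have hr : Module.finrank ℝ (LinearMap.range T) ≤ s.card := by
      have h3 := (LinearMap.range T).finrank_le
      have h4 : Module.finrank ℝ ({ x // x ∈ s } → ℝ) = s.card := by
        rw [Module.finrank_pi]; exact Fintype.card_coe s
      omega
    omega
  omega

private lemma finrank_le_card_sign_neg' {n : ℕ} {M : Matrix (Fin n) (Fin n) ℝ} (hM : M.IsHermitian)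
    (P : Submodule ℝ (Fin n → ℝ)) (hP : ∀ x ∈ P, x ≠ 0 → x ⬝ᵥ M.mulVec x < 0) :
    Module.finrank ℝ P ≤ (Finset.univ.filter fun i => hM.eigenvalues i < 0).card := by
  classical
  obtain ⟨L, hL⟩ := sum_eigen_decomp' hM
  set s : Finset (Fin n) := Finset.univ.filter fun i => hM.eigenvalues i < 0 with hs
  set T : (Fin n → ℝ) →ₗ[ℝ] ({ x // x ∈ s } → ℝ) :=
    LinearMap.pi (fun i : s => (LinearMap.proj (i : Fin n)).comp L) with hT
  set F := LinearMap.ker T with hFdef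
  have hF : ∀ x ∈ F, 0 ≤ x ⬝ᵥ M.mulVec x := by
    intro x hx
    rw [hL]
    refine Finset.sum_nonneg fun i _ => ?_
    by_cases hi : hM.eigenvalues i < 0
    · have hmem : i ∈ s := by simp [hs, hi]
      have hz : L x i = 0 := by
        have h0 := LinearMap.mem_ker.1 hx
        have := congrFun h0 ⟨i, hmem⟩
        simpa [hT] using this
      simp [hz]
    · exact mul_nonneg (le_of_not_gt hi) (sq_nonneg _)
  have hdisj : P ⊓ F = ⊥ := by
    rw [Submodule.eq_bot_iff]
    rintro x ⟨hxP, hxF⟩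
    by_contra hx0
    exact absurd (hP x hxP hx0) (not_lt.2 (hF x hxF))
  have h1 : Module.finrank ℝ P + Module.finrank ℝ F ≤ n := by
    have h := Submodule.finrank_sup_add_finrank_inf_eq P F
    rw [hdisj, finrank_bot, add_zero] at h
    rw [← h]
    have h5 := Submodule.finrank_le (P ⊔ F)
    simpa using h5
  have h2 : n ≤ Module.finrank ℝ F + s.card := by
    have h := LinearMap.finrank_range_add_finrank_ker T
    rw [← hFdef] at h
    have hp : Module.finrank ℝ (Fin n → ℝ) = n := by simp
    rw [hp] at h
    have hr : Module.finrank ℝ (LinearMap.range T) ≤ s.card := by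
      have h3 := (LinearMap.range T).finrank_le
      have h4 : Module.finrank ℝ ({ x // x ∈ s } → ℝ) = s.card := by
        rw [Module.finrank_pi]; exact Fintype.card_coe s
      omega
    omega
  omega

private lemma trace_root_pow' (f : Polynomial ℝ) (hf : f ≠ 0) (hsf : Squarefree f) (m : ℕ) :
    algebraMap ℝ ℂ
        (LinearMap.trace ℝ (AdjoinRoot f) (LinearMap.mulLeft ℝ (AdjoinRoot.root f ^ m)))
      = ∑ α ∈ (f.map (algebraMap ℝ ℂ)).roots.toFinset, α ^ m := by
  classical
  set g : Polynomial ℂ := f.map (algebraMap ℝ ℂ) with hg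
  have hg0 : g ≠ 0 := Polynomial.map_ne_zero hf
  have hsep : f.Separable := PerfectField.separable_iff_squarefree.2 hsf
  have hgsep : g.Separable := hsep.map
  set A := AdjoinRoot f with hA
  letI : Module.Finite ℝ A := Module.Finite.of_basis (AdjoinRoot.powerBasis hf).basis
  letI : Module.Free ℝ A := Module.Free.of_basis (AdjoinRoot.powerBasis hf).basis
  set R' := { x // x ∈ g.roots.toFinset } with hR'
  have hroot : ∀ α : R', g.eval (α : ℂ) = 0 := fun α =>
    (Polynomial.mem_roots hg0).1 (Multiset.mem_toFinset.1 α.2)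
  have haev : Polynomial.aeval (fun α : R' => (α : ℂ)) f = (0 : R' → ℂ) := by
    funext α
    have h1 : (Polynomial.aeval (fun α : R' => (α : ℂ)) f) α
        = Polynomial.aeval ((α : ℂ)) f := by
      have := Polynomial.aeval_algHom_apply (Pi.evalAlgHom ℝ (fun _ : R' => ℂ) α)
        (fun α : R' => (α : ℂ)) f
      simpa using this.symm
    rw [h1, Polynomial.aeval_def, ← Polynomial.eval_map]
    exact hroot α
  set ψ : A →ₐ[ℝ] (R' → ℂ) := AdjoinRoot.liftAlgHom f (Algebra.ofId ℝ (R' → ℂ)) (fun α : R' => (α : ℂ))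
    (show f.eval₂ ((Algebra.ofId ℝ (R' → ℂ) : ℝ →ₐ[ℝ] (R' → ℂ)) : ℝ →+* (R' → ℂ))
      (fun α : R' => (α : ℂ)) = 0 from by rw [Polynomial.aeval_def] at haev; exact haev) with hψ
  set Φ : TensorProduct ℝ ℂ A →ₐ[ℂ] (R' → ℂ) :=
    Algebra.TensorProduct.lift (Algebra.ofId ℂ (R' → ℂ)) ψ (fun _ _ => Commute.all _ _) with hΦ
  have hψroot : ∀ k : ℕ, ψ (AdjoinRoot.root f ^ k) = fun α : R' => (α : ℂ) ^ k := by
    intro k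
    rw [map_pow]
    funext α
    rw [hψ, AdjoinRoot.liftAlgHom_root]
    simp
  have hΦtmul : ∀ (c : ℂ) (a : A), Φ (c ⊗ₜ[ℝ] a) = c • ψ a := by
    intro c a
    rw [hΦ, Algebra.TensorProduct.lift_tmul]
    rw [Algebra.smul_def]
    rfl
  have hsurj : Function.Surjective Φ := by
    intro v
    set q : Polynomial ℂ := Lagrange.interpolate Finset.univ (fun α : R' => (α : ℂ)) v with hq
    refine ⟨∑ k ∈ q.support, q.coeff k ⊗ₜ[ℝ] (AdjoinRoot.root f ^ k), ?_⟩
    rw [map_sum]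
    funext α
    have hterm : ∀ k ∈ q.support, Φ (q.coeff k ⊗ₜ[ℝ] (AdjoinRoot.root f ^ k)) α
        = q.coeff k * (α : ℂ) ^ k := by
      intro k _
      rw [hΦtmul, hψroot]
      simp
    rw [Finset.sum_apply, Finset.sum_congr rfl hterm]
    have heval : q.eval (α : ℂ) = v α :=
      Lagrange.eval_interpolate_at_node v (Subtype.val_injective.injOn) (Finset.mem_univ α)
    rw [← heval, Polynomial.eval_eq_sum, Polynomial.sum_def]
  have hcardR' : Fintype.card R' = f.natDegree := by
    have h1 : Fintype.card R' = g.roots.toFinset.card := Fintype.card_coe _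
    have h2 : g.roots.toFinset.card = Multiset.card g.roots :=
      Multiset.toFinset_card_of_nodup (Polynomial.nodup_roots hgsep)
    have h4 : g.natDegree = f.natDegree := Polynomial.natDegree_map_eq_of_injective
      (algebraMap ℝ ℂ).injective f
    rw [h1, h2]
    rw [Polynomial.splits_iff_card_roots.1 (IsAlgClosed.splits g)]
    exact h4
  have hinj : Function.Injective Φ := by
    have hfr1 : Module.finrank ℂ (TensorProduct ℝ ℂ A) = f.natDegree := by
      rw [Module.finrank_baseChange]
      rw [(AdjoinRoot.powerBasis hf).finrank]
      exact AdjoinRoot.powerBasis_dim hf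
    have hfr2 : Module.finrank ℂ (R' → ℂ) = f.natDegree := by
      rw [Module.finrank_pi]
      exact hcardR'
    exact (LinearMap.injective_iff_surjective_of_finrank_eq_finrank
      (f := Φ.toLinearMap) (by rw [hfr1, hfr2])).2 hsurj
  set E : TensorProduct ℝ ℂ A ≃ₐ[ℂ] (R' → ℂ) := AlgEquiv.ofBijective Φ ⟨hinj, hsurj⟩ with hE
  have hbc : (LinearMap.mulLeft ℝ (AdjoinRoot.root f ^ m)).baseChange ℂ
      = LinearMap.mulLeft ℂ ((1 : ℂ) ⊗ₜ[ℝ] (AdjoinRoot.root f ^ m)) := by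
    refine LinearMap.ext fun z => ?_
    induction z using TensorProduct.induction_on with
    | zero => simp
    | tmul c a =>
      simp [LinearMap.baseChange_tmul, Algebra.TensorProduct.tmul_mul_tmul]
    | add u w hu hw => simp only [map_add, hu, hw]
  calc algebraMap ℝ ℂ
        (LinearMap.trace ℝ A (LinearMap.mulLeft ℝ (AdjoinRoot.root f ^ m)))
      = LinearMap.trace ℂ (TensorProduct ℝ ℂ A)
          ((LinearMap.mulLeft ℝ (AdjoinRoot.root f ^ m)).baseChange ℂ) :=
        (LinearMap.trace_baseChange _ ℂ).symm
    _ = LinearMap.trace ℂ (TensorProduct ℝ ℂ A)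
          (LinearMap.mulLeft ℂ ((1 : ℂ) ⊗ₜ[ℝ] (AdjoinRoot.root f ^ m))) := by rw [hbc]
    _ = LinearMap.trace ℂ (R' → ℂ)
          (LinearMap.mulLeft ℂ (E ((1 : ℂ) ⊗ₜ[ℝ] (AdjoinRoot.root f ^ m)))) :=
        (trace_mulLeft_algEquiv' E _).symm
    _ = ∑ α : R', (α : ℂ) ^ m := by
        have hEval : E ((1 : ℂ) ⊗ₜ[ℝ] (AdjoinRoot.root f ^ m))
            = fun α : R' => (α : ℂ) ^ m := by
          rw [hE]
          rw [show (AlgEquiv.ofBijective Φ ⟨hinj, hsurj⟩) ((1 : ℂ) ⊗ₜ[ℝ] (AdjoinRoot.root f ^ m))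
            = Φ ((1 : ℂ) ⊗ₜ[ℝ] (AdjoinRoot.root f ^ m)) from rfl]
          rw [hΦtmul, hψroot, one_smul]
        rw [hEval, trace_mulLeft_pi']
    _ = ∑ α ∈ g.roots.toFinset, α ^ m := by
        rw [← Finset.sum_coe_sort g.roots.toFinset (fun α => α ^ m)]

end AuxLemmas

theorem hermite_form_rank_and_signature_univariate
    (f : Polynomial ℝ) (hf : f ≠ 0) (hsf : Squarefree f)
    (H : Matrix (Fin (AdjoinRoot.powerBasis hf).dim) (Fin (AdjoinRoot.powerBasis hf).dim) ℝ)
    (hH : ∀ i j, H i j = LinearMap.trace ℝ (AdjoinRoot f)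
      (LinearMap.mulLeft ℝ
        ((AdjoinRoot.powerBasis hf).basis i * (AdjoinRoot.powerBasis hf).basis j))) :
    H.rank = (f.map (algebraMap ℝ ℂ)).roots.toFinset.card ∧
    H.rank = f.natDegree ∧
    ∃ hsymm : H.IsHermitian,
      ((Finset.univ.filter fun i => 0 < hsymm.eigenvalues i).card : ℤ) -
          ((Finset.univ.filter fun i => hsymm.eigenvalues i < 0).card : ℤ) =
        (f.roots.toFinset.card : ℤ) := by
  classical
  have hDD : (AdjoinRoot.powerBasis hf).dim = f.natDegree := AdjoinRoot.powerBasis_dim hf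
  set g : Polynomial ℂ := f.map (algebraMap ℝ ℂ) with hgdef
  have hg0 : g ≠ 0 := Polynomial.map_ne_zero hf
  have hsep : f.Separable := PerfectField.separable_iff_squarefree.2 hsf
  have hgsep : g.Separable := hsep.map
  set R : Finset ℂ := g.roots.toFinset with hRdef
  have hcardR : R.card = f.natDegree := by
    have h2 : R.card = Multiset.card g.roots :=
      Multiset.toFinset_card_of_nodup (Polynomial.nodup_roots hgsep)
    have h4 : g.natDegree = f.natDegree := Polynomial.natDegree_map_eq_of_injective
      (algebraMap ℝ ℂ).injective f
    rw [h2, Polynomial.splits_iff_card_roots.1 (IsAlgClosed.splits g)]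
    exact h4
  -- entries of H over ℂ
  have hHC : ∀ i j : Fin (AdjoinRoot.powerBasis hf).dim, ((H i j : ℝ) : ℂ) = ∑ α ∈ R, α ^ ((i : ℕ) + (j : ℕ)) := by
    intro i j
    have hb : (AdjoinRoot.powerBasis hf).basis i * (AdjoinRoot.powerBasis hf).basis j
        = AdjoinRoot.root f ^ ((i : ℕ) + (j : ℕ)) := by
      rw [PowerBasis.basis_eq_pow, PowerBasis.basis_eq_pow, AdjoinRoot.powerBasis_gen, ← pow_add]
    have ht := trace_root_pow' f hf hsf ((i : ℕ) + (j : ℕ))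
    rw [Complex.coe_algebraMap] at ht
    rw [hH i j, hb]
    exact ht
  -- enumeration of roots
  set R' := { x // x ∈ R } with hR'def
  have hcardR' : Fintype.card R' = (AdjoinRoot.powerBasis hf).dim := by
    rw [Fintype.card_coe, hcardR, hDD]
  set e : Fin (AdjoinRoot.powerBasis hf).dim ≃ R' := (Fintype.equivFinOfCardEq hcardR').symm with hedef
  set t : Fin (AdjoinRoot.powerBasis hf).dim → ℂ := fun k => ((e k : ℂ)) with htdef
  have ht_inj : Function.Injective t := by
    intro a b hab
    exact e.injective (Subtype.ext hab)
  have hreidx : ∀ F : ℂ → ℂ, ∑ α ∈ R, F α = ∑ k : Fin (AdjoinRoot.powerBasis hf).dim, F (t k) := by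
    intro F
    rw [← Finset.sum_coe_sort R F]
    exact (Fintype.sum_equiv e (fun k => F (t k)) (fun α : R' => F ↑α) (fun k => rfl)).symm
  have htmem : ∀ k, t k ∈ R := fun k => (e k).2
  -- rank part
  have hmap : H.map (algebraMap ℝ ℂ) = (Matrix.vandermonde t)ᵀ * (Matrix.vandermonde t) := by
    ext i j
    rw [Matrix.map_apply, Matrix.mul_apply, Complex.coe_algebraMap]
    show ((H i j : ℝ) : ℂ) = _
    rw [hHC i j, hreidx (fun α => α ^ ((i : ℕ) + (j : ℕ)))]
    refine Finset.sum_congr rfl fun k _ => ?_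
    rw [Matrix.transpose_apply, Matrix.vandermonde_apply, Matrix.vandermonde_apply, pow_add]
  have hdet : H.det ≠ 0 := by
    intro h0
    have h1 : (H.map (algebraMap ℝ ℂ)).det = 0 := by
      rw [← RingHom.mapMatrix_apply, ← RingHom.map_det, h0, map_zero]
    rw [hmap, Matrix.det_mul, Matrix.det_transpose] at h1
    have h2 : (Matrix.vandermonde t).det ≠ 0 := Matrix.det_vandermonde_ne_zero_iff.2 ht_inj
    exact h2 (by
      rcases mul_eq_zero.1 h1 with h | h
      · exact h
      · exact h)
  have hrank : H.rank = (AdjoinRoot.powerBasis hf).dim := by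
    rw [Matrix.rank_of_isUnit H ((Matrix.isUnit_iff_isUnit_det H).2 (isUnit_iff_ne_zero.2 hdet))]
    exact Fintype.card_fin (AdjoinRoot.powerBasis hf).dim
  have hsymm : H.IsHermitian := by
    show H.conjTranspose = H
    ext i j
    rw [Matrix.conjTranspose_apply, star_trivial, hH j i, hH i j, mul_comm]
  refine ⟨by rw [hrank, hDD, ← hcardR], by rw [hrank, hDD], hsymm, ?_⟩
  -- filtered root sets
  set Rreal : Finset ℂ := R.filter (fun α => α.im = 0) with hRreal
  set Rpos : Finset ℂ := R.filter (fun α => 0 < α.im) with hRpos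
  set Rneg : Finset ℂ := R.filter (fun α => α.im < 0) with hRneg
  have hgeval : ∀ x : ℝ, g.eval ((x : ℝ) : ℂ) = ((f.eval x : ℝ) : ℂ) := by
    intro x
    rw [hgdef, Polynomial.eval_map, ← Complex.coe_algebraMap]
    exact Polynomial.eval₂_hom (algebraMap ℝ ℂ) x
  have hconjR : ∀ α ∈ R, (starRingEnd ℂ) α ∈ R := by
    intro α hα
    rw [hRdef, Multiset.mem_toFinset, Polynomial.mem_roots hg0] at hα ⊢
    have h1 : (starRingEnd ℂ) (g.eval α) = g.eval ((starRingEnd ℂ) α) := by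
      rw [hgdef, Polynomial.eval_map, Polynomial.eval_map,
        Polynomial.hom_eval₂ f (algebraMap ℝ ℂ) (starRingEnd ℂ) α]
      congr 1
      exact RingHom.ext fun r => Complex.conj_ofReal r
    show g.eval ((starRingEnd ℂ) α) = 0
    rw [← h1, hα, map_zero]
  have hrcount : f.roots.toFinset.card = Rreal.card := by
    refine Finset.card_bij' (fun x _ => ((x : ℝ) : ℂ)) (fun α _ => α.re) ?_ ?_ ?_ ?_
    · intro x hx
      have hx' : f.IsRoot x := (Polynomial.mem_roots'.1 (Multiset.mem_toFinset.1 hx)).2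
      rw [hRreal, Finset.mem_filter]
      constructor
      · rw [hRdef, Multiset.mem_toFinset, Polynomial.mem_roots hg0]
        show g.eval _ = 0
        rw [hgeval x, hx'.eq_zero, Complex.ofReal_zero]
      · exact Complex.ofReal_im x
    · intro α hα
      rw [hRreal, Finset.mem_filter] at hα
      obtain ⟨hαR, him⟩ := hα
      have hα' : α = ((α.re : ℝ) : ℂ) := by
        apply Complex.ext
        · simp
        · simp [him]
      rw [Multiset.mem_toFinset, Polynomial.mem_roots hf]
      show f.eval α.re = 0
      have h2 : g.eval α = 0 := by
        rw [hRdef, Multiset.mem_toFinset, Polynomial.mem_roots hg0] at hαR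
        exact hαR
      rw [hα'] at h2
      rw [hgeval α.re] at h2
      exact_mod_cast h2
    · intro x _; exact Complex.ofReal_re x
    · intro α hα
      rw [hRreal, Finset.mem_filter] at hα
      apply Complex.ext
      · simp
      · simp [hα.2]
  have hcposneg : Rpos.card = Rneg.card := by
    refine Finset.card_bij' (fun α _ => (starRingEnd ℂ) α) (fun α _ => (starRingEnd ℂ) α)
      ?_ ?_ ?_ ?_
    · intro α hα
      rw [hRpos, Finset.mem_filter] at hα
      rw [hRneg, Finset.mem_filter]
      exact ⟨hconjR α hα.1, by rw [Complex.conj_im]; linarith [hα.2]⟩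
    · intro α hα
      rw [hRneg, Finset.mem_filter] at hα
      rw [hRpos, Finset.mem_filter]
      exact ⟨hconjR α hα.1, by rw [Complex.conj_im]; linarith [hα.2]⟩
    · intro α _; exact Complex.conj_conj α
    · intro α _; exact Complex.conj_conj α
  have hpart : R.card = Rreal.card + Rpos.card + Rneg.card := by
    have h1 := Finset.card_filter_add_card_filter_not (s := R) (p := fun α => α.im = 0)
    have h2 : R.filter (fun α => ¬ α.im = 0) = Rpos ∪ Rneg := by
      ext α
      rw [Finset.mem_union, hRpos, hRneg, Finset.mem_filter, Finset.mem_filter,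
        Finset.mem_filter]
      constructor
      · rintro ⟨hαR, hne⟩
        rcases lt_or_gt_of_ne hne with h | h
        · exact Or.inr ⟨hαR, h⟩
        · exact Or.inl ⟨hαR, h⟩
      · rintro (⟨hαR, h⟩ | ⟨hαR, h⟩)
        · exact ⟨hαR, by linarith⟩
        · exact ⟨hαR, by linarith⟩
    have h3 : (Rpos ∪ Rneg).card = Rpos.card + Rneg.card := by
      apply Finset.card_union_of_disjoint
      rw [Finset.disjoint_left]
      intro α h1' h2'
      rw [hRpos, Finset.mem_filter] at h1'
      rw [hRneg, Finset.mem_filter] at h2'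
      linarith [h1'.2, h2'.2]
    rw [h2, h3] at h1
    rw [← hRreal] at h1
    omega
  -- the evaluation linear maps
  set evL : ℂ → ((Fin (AdjoinRoot.powerBasis hf).dim → ℝ) →ₗ[ℝ] ℂ) := fun α =>
    ∑ i : Fin (AdjoinRoot.powerBasis hf).dim, (α ^ (i : ℕ)) • (Complex.ofRealAm.toLinearMap ∘ₗ LinearMap.proj i) with hevL
  have hev : ∀ (α : ℂ) (x : Fin (AdjoinRoot.powerBasis hf).dim → ℝ), evL α x = ∑ i : Fin (AdjoinRoot.powerBasis hf).dim, ((x i : ℝ) : ℂ) * α ^ (i : ℕ) := by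
    intro α x
    rw [hevL]
    rw [LinearMap.sum_apply]
    refine Finset.sum_congr rfl fun i _ => ?_
    rw [LinearMap.smul_apply, LinearMap.comp_apply, LinearMap.proj_apply, smul_eq_mul]
    rw [mul_comm]
    rfl
  have hev_conj : ∀ (x : Fin (AdjoinRoot.powerBasis hf).dim → ℝ) (α : ℂ),
      evL ((starRingEnd ℂ) α) x = (starRingEnd ℂ) (evL α x) := by
    intro x α
    rw [hev, hev, map_sum]
    refine Finset.sum_congr rfl fun i _ => ?_
    rw [_root_.map_mul, map_pow, Complex.conj_ofReal]
  have hev_zero : ∀ x : Fin (AdjoinRoot.powerBasis hf).dim → ℝ, (∀ α ∈ R, evL α x = 0) → x = 0 := by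
    intro x hx
    have hmv : (Matrix.vandermonde t).mulVec (fun i => ((x i : ℝ) : ℂ)) = 0 := by
      funext k
      show ∑ i, Matrix.vandermonde t k i * ((x i : ℝ) : ℂ) = 0
      rw [← hx (t k) (htmem k), hev]
      refine Finset.sum_congr rfl fun i _ => ?_
      rw [Matrix.vandermonde_apply, mul_comm]
    have hz := Matrix.eq_zero_of_mulVec_eq_zero
      (Matrix.det_vandermonde_ne_zero_iff.2 ht_inj) hmv
    funext i
    have := congrFun hz i
    simpa using this
  -- quadratic form identity
  have hQ : ∀ x : Fin (AdjoinRoot.powerBasis hf).dim → ℝ, ((x ⬝ᵥ H.mulVec x : ℝ) : ℂ) = ∑ α ∈ R, (evL α x) ^ 2 := by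
    intro x
    have h1 : x ⬝ᵥ H.mulVec x = ∑ i, ∑ j, x i * x j * H i j := by
      simp only [dotProduct, Matrix.mulVec, Finset.mul_sum]
      exact Finset.sum_congr rfl fun i _ => Finset.sum_congr rfl fun j _ => by ring
    have h2 : ∀ i j : Fin (AdjoinRoot.powerBasis hf).dim, ((x i : ℝ) : ℂ) * ((x j : ℝ) : ℂ) * ((H i j : ℝ) : ℂ)
        = ∑ α ∈ R, (((x i : ℝ) : ℂ) * α ^ (i : ℕ)) * (((x j : ℝ) : ℂ) * α ^ (j : ℕ)) := by
      intro i j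
      rw [hHC i j, Finset.mul_sum]
      refine Finset.sum_congr rfl fun α _ => ?_
      rw [pow_add]
      ring
    have h3 : ((x ⬝ᵥ H.mulVec x : ℝ) : ℂ)
        = ∑ i, ∑ j, ∑ α ∈ R, (((x i : ℝ) : ℂ) * α ^ (i : ℕ)) * (((x j : ℝ) : ℂ) * α ^ (j : ℕ)) := by
      rw [h1]
      push_cast
      exact Finset.sum_congr rfl fun i _ => Finset.sum_congr rfl fun j _ => h2 i j
    calc ((x ⬝ᵥ H.mulVec x : ℝ) : ℂ)
        = ∑ i, ∑ j, ∑ α ∈ R, (((x i : ℝ) : ℂ) * α ^ (i : ℕ)) * (((x j : ℝ) : ℂ) * α ^ (j : ℕ)) := h3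
      _ = ∑ i, ∑ α ∈ R, ∑ j, (((x i : ℝ) : ℂ) * α ^ (i : ℕ)) * (((x j : ℝ) : ℂ) * α ^ (j : ℕ)) :=
          Finset.sum_congr rfl fun i _ => Finset.sum_comm
      _ = ∑ α ∈ R, ∑ i, ∑ j, (((x i : ℝ) : ℂ) * α ^ (i : ℕ)) * (((x j : ℝ) : ℂ) * α ^ (j : ℕ)) :=
          Finset.sum_comm
      _ = ∑ α ∈ R, (evL α x) ^ 2 :=
          Finset.sum_congr rfl fun α _ => by rw [sq, hev, Finset.sum_mul_sum]
  have hQre : ∀ x : Fin (AdjoinRoot.powerBasis hf).dim → ℝ,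
      x ⬝ᵥ H.mulVec x = ∑ α ∈ R, ((evL α x).re ^ 2 - (evL α x).im ^ 2) := by
    intro x
    have := congrArg Complex.re (hQ x)
    rw [Complex.ofReal_re, Complex.re_sum] at this
    rw [this]
    refine Finset.sum_congr rfl fun α _ => ?_
    rw [sq, Complex.mul_re]
    ring
  -- positive subspace
  set Pp : Submodule ℝ (Fin (AdjoinRoot.powerBasis hf).dim → ℝ) :=
    LinearMap.ker (LinearMap.pi fun a : { α // α ∈ Rpos } =>
      Complex.imLm ∘ₗ evL (a : ℂ)) with hPpdef
  set Nn : Submodule ℝ (Fin (AdjoinRoot.powerBasis hf).dim → ℝ) :=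
    LinearMap.ker (LinearMap.pi fun a : { α // α ∈ R.filter (fun α => 0 ≤ α.im) } =>
      Complex.reLm ∘ₗ evL (a : ℂ)) with hNndef
  have hPim : ∀ x ∈ Pp, ∀ α ∈ R, (evL α x).im = 0 := by
    intro x hx α hα
    have hker : ∀ β (hβ : β ∈ Rpos), (evL β x).im = 0 := by
      intro β hβ
      have h0 := LinearMap.mem_ker.1 hx
      have := congrFun h0 ⟨β, hβ⟩
      simpa using this
    rcases lt_trichotomy α.im 0 with hlt | heq | hgt
    · have hβmem : (starRingEnd ℂ) α ∈ Rpos := by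
        rw [hRpos, Finset.mem_filter]
        exact ⟨hconjR α hα, by rw [Complex.conj_im]; linarith⟩
      have h2 := hev_conj x ((starRingEnd ℂ) α)
      rw [Complex.conj_conj] at h2
      rw [h2, Complex.conj_im, hker _ hβmem, neg_zero]
    · have h2 := hev_conj x α
      rw [Complex.conj_eq_iff_im.2 heq] at h2
      have := Complex.conj_eq_iff_im.1 h2.symm
      exact this
    · exact hker α (by rw [hRpos, Finset.mem_filter]; exact ⟨hα, hgt⟩)
  have hNre : ∀ x ∈ Nn, ∀ α ∈ R, (evL α x).re = 0 := by
    intro x hx α hα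
    have hker : ∀ β (hβ : β ∈ R.filter (fun α => 0 ≤ α.im)), (evL β x).re = 0 := by
      intro β hβ
      have h0 := LinearMap.mem_ker.1 hx
      have := congrFun h0 ⟨β, hβ⟩
      simpa using this
    rcases lt_or_ge α.im 0 with hlt | hge
    · have hβmem : (starRingEnd ℂ) α ∈ R.filter (fun α => 0 ≤ α.im) := by
        rw [Finset.mem_filter]
        exact ⟨hconjR α hα, by rw [Complex.conj_im]; linarith⟩
      have h2 := hev_conj x ((starRingEnd ℂ) α)
      rw [Complex.conj_conj] at h2
      rw [h2, Complex.conj_re, hker _ hβmem]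
    · exact hker α (by rw [Finset.mem_filter]; exact ⟨hα, hge⟩)
  have hPpos : ∀ x ∈ Pp, x ≠ 0 → 0 < x ⬝ᵥ H.mulVec x := by
    intro x hx hx0
    rw [hQre x]
    have hex : ∃ α ∈ R, evL α x ≠ 0 := by
      by_contra hcon
      push_neg at hcon
      exact hx0 (hev_zero x hcon)
    obtain ⟨α₀, hα₀R, hα₀⟩ := hex
    refine Finset.sum_pos' (fun α hα => ?_) ⟨α₀, hα₀R, ?_⟩
    · rw [hPim x hx α hα]
      simpa using sq_nonneg (evL α x).re
    · rw [hPim x hx α₀ hα₀R]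
      have hre : (evL α₀ x).re ≠ 0 := by
        intro hre0
        exact hα₀ (Complex.ext hre0 (hPim x hx α₀ hα₀R))
      have h5 : (0 : ℝ) < (evL α₀ x).re ^ 2 :=
        lt_of_le_of_ne (sq_nonneg _) (Ne.symm (pow_ne_zero 2 hre))
      simpa using h5
  have hNneg : ∀ x ∈ Nn, x ≠ 0 → x ⬝ᵥ H.mulVec x < 0 := by
    intro x hx hx0
    have h1 : x ⬝ᵥ H.mulVec x = ∑ α ∈ R, -((evL α x).im ^ 2) := by
      rw [hQre x]
      refine Finset.sum_congr rfl fun α hα => ?_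
      rw [hNre x hx α hα]
      ring
    rw [h1, Finset.sum_neg_distrib, neg_lt_zero]
    have hex : ∃ α ∈ R, evL α x ≠ 0 := by
      by_contra hcon
      push_neg at hcon
      exact hx0 (hev_zero x hcon)
    obtain ⟨α₀, hα₀R, hα₀⟩ := hex
    refine Finset.sum_pos' (fun α _ => sq_nonneg _) ⟨α₀, hα₀R, ?_⟩
    have him : (evL α₀ x).im ≠ 0 := by
      intro him0
      exact hα₀ (Complex.ext (hNre x hx α₀ hα₀R) him0)
    exact lt_of_le_of_ne (sq_nonneg _) (Ne.symm (pow_ne_zero 2 him))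
  -- dimension lower bounds
  have hdimP : (AdjoinRoot.powerBasis hf).dim ≤ Module.finrank ℝ Pp + Rpos.card := by
    set T := LinearMap.pi fun a : { α // α ∈ Rpos } => Complex.imLm ∘ₗ evL (a : ℂ) with hT
    have h := LinearMap.finrank_range_add_finrank_ker T
    have hp : Module.finrank ℝ (Fin (AdjoinRoot.powerBasis hf).dim → ℝ) = (AdjoinRoot.powerBasis hf).dim := by simp
    rw [hp] at h
    have hr : Module.finrank ℝ (LinearMap.range T) ≤ Rpos.card := by
      have h3 := (LinearMap.range T).finrank_le
      have h4 : Module.finrank ℝ ({ α // α ∈ Rpos } → ℝ) = Rpos.card := by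
        rw [Module.finrank_pi]; exact Fintype.card_coe Rpos
      omega
    rw [hPpdef]
    omega
  have hdimN : (AdjoinRoot.powerBasis hf).dim ≤ Module.finrank ℝ Nn + (Rreal.card + Rpos.card) := by
    set T := LinearMap.pi fun a : { α // α ∈ R.filter (fun α => 0 ≤ α.im) } =>
      Complex.reLm ∘ₗ evL (a : ℂ) with hT
    have h := LinearMap.finrank_range_add_finrank_ker T
    have hp : Module.finrank ℝ (Fin (AdjoinRoot.powerBasis hf).dim → ℝ) = (AdjoinRoot.powerBasis hf).dim := by simp
    rw [hp] at h
    have hsplit : (R.filter (fun α => 0 ≤ α.im)).card = Rreal.card + Rpos.card := by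
      have h2 : R.filter (fun α => 0 ≤ α.im) = Rreal ∪ Rpos := by
        ext α
        rw [Finset.mem_union, hRreal, hRpos, Finset.mem_filter, Finset.mem_filter,
          Finset.mem_filter]
        constructor
        · rintro ⟨hαR, hge⟩
          rcases eq_or_lt_of_le hge with h | h
          · exact Or.inl ⟨hαR, h.symm⟩
          · exact Or.inr ⟨hαR, h⟩
        · rintro (⟨hαR, h⟩ | ⟨hαR, h⟩)
          · exact ⟨hαR, le_of_eq h.symm⟩
          · exact ⟨hαR, le_of_lt h⟩
      rw [h2]
      apply Finset.card_union_of_disjoint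
      rw [Finset.disjoint_left]
      intro α h1' h2'
      rw [hRreal, Finset.mem_filter] at h1'
      rw [hRpos, Finset.mem_filter] at h2'
      linarith [h2'.2, le_of_eq h1'.2]
    have hr : Module.finrank ℝ (LinearMap.range T) ≤ Rreal.card + Rpos.card := by
      have h3 := (LinearMap.range T).finrank_le
      have h4 : Module.finrank ℝ ({ α // α ∈ R.filter (fun α => 0 ≤ α.im) } → ℝ)
          = (R.filter (fun α => 0 ≤ α.im)).card := by
        rw [Module.finrank_pi]; exact Fintype.card_coe _
      omega
    rw [hNndef]
    omega
  -- Sylvester bounds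
  have hp1 : Module.finrank ℝ Pp ≤ (Finset.univ.filter fun i => 0 < hsymm.eigenvalues i).card :=
    finrank_le_card_sign' hsymm Pp hPpos
  have hn1 : Module.finrank ℝ Nn ≤ (Finset.univ.filter fun i => hsymm.eigenvalues i < 0).card :=
    finrank_le_card_sign_neg' hsymm Nn hNneg
  have hpn : (Finset.univ.filter fun i => 0 < hsymm.eigenvalues i).card
      + (Finset.univ.filter fun i => hsymm.eigenvalues i < 0).card ≤ (AdjoinRoot.powerBasis hf).dim := by
    have hdis : Disjoint (Finset.univ.filter fun i => 0 < hsymm.eigenvalues i)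
        (Finset.univ.filter fun i => hsymm.eigenvalues i < 0) := by
      rw [Finset.disjoint_left]
      intro a ha hb
      rw [Finset.mem_filter] at ha hb
      linarith [ha.2, hb.2]
    have h1 := Finset.card_union_of_disjoint hdis
    have h2 := Finset.card_le_univ ((Finset.univ.filter fun i => 0 < hsymm.eigenvalues i)
      ∪ (Finset.univ.filter fun i => hsymm.eigenvalues i < 0))
    rw [h1] at h2
    simpa using h2
  have hDR : (AdjoinRoot.powerBasis hf).dim = R.card := by rw [hcardR, hDD]
  omega
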